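/- Let (X,u) and (Y,v) be closure spaces and σ a Čech closure operator on Y^X. Then σ is proper if and only if every net in Y^X that converges continuously to some f ∈ Y^X also converges to f in (Y^X,σ); and σ is admissible if and only if every net in Y^X that converges to some f ∈ Y^X in (Y^X,σ) also converges continuously to f. -/
import Mathlib


open Set

universe u

/-- A Čech closure operator on a type `X`: it satisfies (C1) `cl ∅ = ∅`,
(C2) `A ⊆ cl A` and (C3) `cl (A ∪ B) = cl A ∪ cl B`.  The pair `(X, u)` is a
(Čech) closure space. -/
structure CechClosure (X : Type u) : Type u where
  cl : Set X → Set X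
  cl_empty : cl ∅ = ∅
  subset_cl : ∀ A : Set X, A ⊆ cl A
  cl_union : ∀ A B : Set X, cl (A ∪ B) = cl A ∪ cl B

namespace CechClosure

variable {X Y Z : Type u}

/-- The interior operator of a closure space: `int_u A = X \ u (X \ A)`. -/
def interior (u : CechClosure X) (A : Set X) : Set X := (u.cl Aᶜ)ᶜ

/-- `U` is a neighbourhood of `x` in `(X, u)` if `x ∈ int_u U`. -/
def Nhd (u : CechClosure X) (x : X) (U : Set X) : Prop := x ∈ u.interior U

theorem interior_subset (u : CechClosure X) (A : Set X) : u.interior A ⊆ A := by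
  intro x hx
  by_contra h
  exact hx (u.subset_cl _ h)

theorem interior_inter (u : CechClosure X) (A B : Set X) :
    u.interior (A ∩ B) = u.interior A ∩ u.interior B := by
  unfold interior
  rw [compl_inter, u.cl_union, compl_union]

theorem nhd_univ (u : CechClosure X) (x : X) : u.Nhd x univ := by
  simp [Nhd, interior, u.cl_empty]

theorem nhd_inter (u : CechClosure X) {x : X} {A B : Set X} (hA : u.Nhd x A)
    (hB : u.Nhd x B) : u.Nhd x (A ∩ B) := by
  have h := u.interior_inter A B
  unfold Nhd at *
  rw [h]
  exact ⟨hA, hB⟩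

/-- A function `f : (X, u) → (Y, v)` between closure spaces is continuous if
`f (u A) ⊆ v (f A)` for every `A ⊆ X`. -/
def Continuous (u : CechClosure X) (v : CechClosure Y) (f : X → Y) : Prop :=
  ∀ A : Set X, f '' u.cl A ⊆ v.cl (f '' A)

/-- The product of two closure spaces: `(z, x)` is in the closure of `S` iff every
"rectangle" `W ×ˢ U` of neighbourhoods `W` of `z` and `U` of `x` meets `S`. -/
def prod (w : CechClosure Z) (u : CechClosure X) : CechClosure (Z × X) where
  cl S := {p | ∀ W U, w.Nhd p.1 W → u.Nhd p.2 U → (W ×ˢ U ∩ S).Nonempty}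
  cl_empty := by
    ext p
    simp only [mem_setOf_eq, mem_empty_iff_false, iff_false]
    intro h
    rcases h univ univ (w.nhd_univ _) (u.nhd_univ _) with ⟨q, -, hq⟩
    exact hq
  subset_cl := by
    intro S p hp W U hW hU
    exact ⟨p, ⟨⟨w.interior_subset _ hW, u.interior_subset _ hU⟩, hp⟩⟩
  cl_union := by
    intro S T
    ext p
    simp only [mem_setOf_eq, mem_union]
    constructor
    · intro h
      by_contra hc
      push_neg at hc
      obtain ⟨h1, h2⟩ := hc
      simp only [← Set.not_nonempty_iff_eq_empty] at h1 h2
      obtain ⟨W1, U1, hW1, hU1, hne1⟩ := h1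
      obtain ⟨W2, U2, hW2, hU2, hne2⟩ := h2
      rcases h (W1 ∩ W2) (U1 ∩ U2) (w.nhd_inter hW1 hW2) (u.nhd_inter hU1 hU2) with
        ⟨q, ⟨⟨hq1, hq2⟩, hqST⟩⟩
      rcases hqST with hqS | hqT
      · exact hne1 ⟨q, ⟨⟨hq1.1, hq2.1⟩, hqS⟩⟩
      · exact hne2 ⟨q, ⟨⟨hq1.2, hq2.2⟩, hqT⟩⟩
    · rintro (h | h) W U hW hU
      · rcases h W U hW hU with ⟨q, hq1, hq2⟩
        exact ⟨q, hq1, Or.inl hq2⟩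
      · rcases h W U hW hU with ⟨q, hq1, hq2⟩
        exact ⟨q, hq1, Or.inr hq2⟩

/-- `Y^X`: the type of continuous functions between the closure spaces
`(X, u)` and `(Y, v)`. -/
def ContMap (u : CechClosure X) (v : CechClosure Y) : Type u :=
  {f : X → Y // Continuous u v f}

/-- A closure operator `σ` on `Y^X` is proper (splitting) if for every closure space
`(Z, w)`, continuity of `g : (Z, w) × (X, u) → (Y, v)` implies continuity of
`g* : (Z, w) → (Y^X, σ)`, where `g (z, x) = (g* z) x`. -/
def Proper (u : CechClosure X) (v : CechClosure Y) (σ : CechClosure (ContMap u v)) : Prop :=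
  ∀ (Z : Type u) (w : CechClosure Z) (G : Z → ContMap u v),
    Continuous (w.prod u) v (fun p => (G p.1).1 p.2) → Continuous w σ G

/-- A closure operator `σ` on `Y^X` is admissible (jointly continuous) if for every closure
space `(Z, w)`, continuity of `g* : (Z, w) → (Y^X, σ)` implies continuity of
`g : (Z, w) × (X, u) → (Y, v)`, where `g (z, x) = (g* z) x`. -/
def Admissible (u : CechClosure X) (v : CechClosure Y) (σ : CechClosure (ContMap u v)) : Prop :=
  ∀ (Z : Type u) (w : CechClosure Z) (G : Z → ContMap u v),
    Continuous w σ G → Continuous (w.prod u) v (fun p => (G p.1).1 p.2)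

/-- A topological space regarded as a closure space via its (Kuratowski) closure operator. -/
def ofTop {Z : Type u} (t : TopologicalSpace Z) : CechClosure Z :=
  letI := t
  { cl := fun A => _root_.closure A
    cl_empty := closure_empty
    subset_cl := fun _ => subset_closure
    cl_union := fun _ _ => closure_union }

/-- `le` is the order relation of a directed set: a reflexive and transitive relation on a
nonempty type in which every two elements have an upper bound. -/
structure IsDirectedOrder {Λ : Type*} (le : Λ → Λ → Prop) : Prop where
  refl : ∀ a, le a a
  trans : ∀ a b c, le a b → le b c → le a c
  directed : ∀ a b, ∃ c, le a c ∧ le b c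
  nonempty : Nonempty Λ

/-- Convergence of a net `s : Λ → X` (with order `le` on `Λ`) to a point `x` in a closure
space `(X, u)`: every neighbourhood of `x` contains `s l` residually. -/
def NetConv (u : CechClosure X) {Λ : Type*} (le : Λ → Λ → Prop) (s : Λ → X) (x : X) : Prop :=
  ∀ U : Set X, u.Nhd x U → ∃ l₀, ∀ l, le l₀ l → s l ∈ U

/-- The product order on `Λ × M`. -/
def prodLE {Λ M : Type*} (leΛ : Λ → Λ → Prop) (leM : M → M → Prop) :
    Λ × M → Λ × M → Prop :=
  fun p q => leΛ p.1 q.1 ∧ leM p.2 q.2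

/-- A net `F : Λ → Y^X` converges continuously to `f ∈ Y^X` if for every `x ∈ X` and every
net `s : M → X` converging to `x` in `(X, u)`, the net `(l, m) ↦ (F l) (s m)` (indexed by
`Λ × M` with the product order) converges to `f x` in `(Y, v)`. -/
def ContConv (u : CechClosure X) (v : CechClosure Y) {Λ : Type u} (leΛ : Λ → Λ → Prop)
    (F : Λ → ContMap u v) (f : ContMap u v) : Prop :=
  ∀ (M : Type u) (leM : M → M → Prop), IsDirectedOrder leM →
    ∀ (s : M → X) (x : X), NetConv u leM s x →
      NetConv v (prodLE leΛ leM) (fun p : Λ × M => (F p.1).1 (s p.2)) (f.1 x)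

/-- The upper limit of a net `A : Λ → Set X` of subsets of a closure space `(X, u)`: the set
of points `x` such that for every `l₀` and every neighbourhood `U` of `x` there is `l ≥ l₀`
with `A l ∩ U ≠ ∅`. -/
def UpperLim (u : CechClosure X) {Λ : Type*} (le : Λ → Λ → Prop) (A : Λ → Set X) : Set X :=
  {x | ∀ (l₀ : Λ) (U : Set X), u.Nhd x U → ∃ l, le l₀ l ∧ (A l ∩ U).Nonempty}

/-- `g : M → α` is a subnet of `f : Λ → α`: there is `φ : M → Λ` with `g = f ∘ φ` such that
`φ` is residually above any given index of `Λ`. -/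
def IsSubnet {α : Type*} {Λ M : Type*} (leΛ : Λ → Λ → Prop) (leM : M → M → Prop)
    (f : Λ → α) (g : M → α) : Prop :=
  ∃ φ : M → Λ, (∀ m, g m = f (φ m)) ∧ ∀ l₀, ∃ m₀, ∀ m, leM m₀ m → leΛ l₀ (φ m)

end CechClosure
namespace CechClosure

variable {X Y : Type u}
section Aux

variable {Z : Type u}

theorem cl_mono (u : CechClosure X) {A B : Set X} (h : A ⊆ B) : u.cl A ⊆ u.cl B := by
  have : u.cl B = u.cl A ∪ u.cl B := by rw [← u.cl_union, union_eq_self_of_subset_left h]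
  rw [this]; exact subset_union_left

theorem nhd_def (u : CechClosure X) (x : X) (U : Set X) : u.Nhd x U ↔ x ∉ u.cl Uᶜ :=
  Iff.rfl

theorem nhd_mem (u : CechClosure X) {x : X} {U : Set X} (h : u.Nhd x U) : x ∈ U :=
  u.interior_subset U h

theorem nhd_mono (u : CechClosure X) {x : X} {U V : Set X} (h : u.Nhd x U) (hUV : U ⊆ V) :
    u.Nhd x V :=
  fun hc => h (u.cl_mono (compl_subset_compl.2 hUV) hc)

theorem mem_cl_iff (u : CechClosure X) (A : Set X) (x : X) :
    x ∈ u.cl A ↔ ∀ U, u.Nhd x U → (U ∩ A).Nonempty := by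
  constructor
  · intro hx U hU
    by_contra h
    rw [not_nonempty_iff_eq_empty] at h
    have hA : A ⊆ Uᶜ := fun a ha haU => (eq_empty_iff_forall_notMem.1 h a ⟨haU, ha⟩)
    exact hU (u.cl_mono hA hx)
  · intro h
    by_contra hx
    have hn : u.Nhd x Aᶜ := by
      rw [nhd_def, compl_compl]; exact hx
    rcases h Aᶜ hn with ⟨a, ha1, ha2⟩
    exact ha1 ha2

theorem continuous_iff_nhd {u : CechClosure X} {v : CechClosure Y} (f : X → Y) :
    Continuous u v f ↔ ∀ x V, v.Nhd (f x) V → u.Nhd x (f ⁻¹' V) := by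
  constructor
  · intro hf x V hV hc
    have h1 : f x ∈ v.cl (f '' (f ⁻¹' V)ᶜ) := hf _ ⟨x, hc, rfl⟩
    have h2 : f '' (f ⁻¹' V)ᶜ ⊆ Vᶜ := by rintro y ⟨a, ha, rfl⟩; exact ha
    exact hV (v.cl_mono h2 h1)
  · rintro h A y ⟨x, hx, rfl⟩
    rw [mem_cl_iff]
    intro V hV
    rcases (u.mem_cl_iff A x).1 hx _ (h x V hV) with ⟨a, ha1, ha2⟩
    exact ⟨f a, ha1, ⟨a, ha2, rfl⟩⟩

theorem prod_nhd_iff (w : CechClosure Z) (u : CechClosure X) (p : Z × X) (S : Set (Z × X)) :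
    (w.prod u).Nhd p S ↔ ∃ W U, w.Nhd p.1 W ∧ u.Nhd p.2 U ∧ W ×ˢ U ⊆ S := by
  rw [nhd_def]
  show ¬(∀ W U, w.Nhd p.1 W → u.Nhd p.2 U → (W ×ˢ U ∩ Sᶜ).Nonempty) ↔ _
  push_neg
  constructor
  · rintro ⟨W, U, hW, hU, h⟩
    refine ⟨W, U, hW, hU, fun q hq => ?_⟩
    by_contra hqS
    exact eq_empty_iff_forall_notMem.1 h q ⟨hq, hqS⟩
  · rintro ⟨W, U, hW, hU, h⟩
    refine ⟨W, U, hW, hU, ?_⟩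
    rw [eq_empty_iff_forall_notMem]
    rintro q ⟨hq1, hq2⟩
    exact hq2 (h hq1)

/-- The set of neighbourhoods of a point, ordered by reverse inclusion. -/
def nhdLE (u : CechClosure X) (x : X) :
    {U : Set X // u.Nhd x U} → {U : Set X // u.Nhd x U} → Prop :=
  fun a b => b.1 ⊆ a.1

theorem nhdLE_directed (u : CechClosure X) (x : X) : IsDirectedOrder (u.nhdLE x) where
  refl _ := subset_rfl
  trans _ _ _ h1 h2 := h2.trans h1
  directed a b := ⟨⟨a.1 ∩ b.1, u.nhd_inter a.2 b.2⟩, inter_subset_left, inter_subset_right⟩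
  nonempty := ⟨⟨univ, u.nhd_univ x⟩⟩

theorem prodLE_directed {Λ M : Type*} {leΛ : Λ → Λ → Prop} {leM : M → M → Prop}
    (hΛ : IsDirectedOrder leΛ) (hM : IsDirectedOrder leM) :
    IsDirectedOrder (prodLE leΛ leM) where
  refl a := ⟨hΛ.refl a.1, hM.refl a.2⟩
  trans _ _ _ h1 h2 := ⟨hΛ.trans _ _ _ h1.1 h2.1, hM.trans _ _ _ h1.2 h2.2⟩
  directed a b := by
    obtain ⟨c, h1, h2⟩ := hΛ.directed a.1 b.1
    obtain ⟨d, h3, h4⟩ := hM.directed a.2 b.2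
    exact ⟨(c, d), ⟨h1, h3⟩, ⟨h2, h4⟩⟩
  nonempty := by
    obtain ⟨a⟩ := hΛ.nonempty
    obtain ⟨b⟩ := hM.nonempty
    exact ⟨(a, b)⟩

theorem directed_or {Λ : Type*} {le : Λ → Λ → Prop} (h : IsDirectedOrder le)
    {P Q : Λ → Prop} (hpq : ∀ l₀, ∃ l, le l₀ l ∧ (P l ∨ Q l)) :
    (∀ l₀, ∃ l, le l₀ l ∧ P l) ∨ (∀ l₀, ∃ l, le l₀ l ∧ Q l) := by
  by_contra hc
  push_neg at hc
  obtain ⟨⟨a, ha⟩, ⟨b, hb⟩⟩ := hc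
  obtain ⟨c, hac, hbc⟩ := h.directed a b
  obtain ⟨l, hcl, hl⟩ := hpq c
  rcases hl with hl | hl
  · exact ha l (h.trans _ _ _ hac hcl) hl
  · exact hb l (h.trans _ _ _ hbc hcl) hl

/-- The closure space `Λ ∪ {∞}` associated to a directed set `Λ`: points of `Λ` are
isolated, and neighbourhoods of `∞ = none` contain residual tails. -/
def optSpace {Λ : Type u} (le : Λ → Λ → Prop) (h : IsDirectedOrder le) :
    CechClosure (Option Λ) where
  cl S := S ∪ {z | z = none ∧ ∀ l₀, ∃ l, le l₀ l ∧ some l ∈ S}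
  cl_empty := by
    obtain ⟨a⟩ := h.nonempty
    ext z
    simp only [mem_union, mem_empty_iff_false, mem_setOf_eq, false_or, iff_false, not_and]
    rintro rfl hz
    rcases hz a with ⟨l, -, hl⟩
    exact hl
  subset_cl S := subset_union_left
  cl_union S T := by
    ext z
    simp only [mem_union, mem_setOf_eq]
    constructor
    · rintro (( hz | hz) | ⟨rfl, hz⟩)
      · exact Or.inl (Or.inl hz)
      · exact Or.inr (Or.inl hz)
      · rcases directed_or h hz with hz' | hz'
        · exact Or.inl (Or.inr ⟨rfl, hz'⟩)
        · exact Or.inr (Or.inr ⟨rfl, hz'⟩)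
    · rintro ((hz | ⟨rfl, hz⟩) | (hz | ⟨rfl, hz⟩))
      · exact Or.inl (Or.inl hz)
      · refine Or.inr ⟨rfl, fun l₀ => ?_⟩
        obtain ⟨l, h1, h2⟩ := hz l₀
        exact ⟨l, h1, Or.inl h2⟩
      · exact Or.inl (Or.inr hz)
      · refine Or.inr ⟨rfl, fun l₀ => ?_⟩
        obtain ⟨l, h1, h2⟩ := hz l₀
        exact ⟨l, h1, Or.inr h2⟩

theorem optSpace_nhd_some {Λ : Type u} {le : Λ → Λ → Prop} (h : IsDirectedOrder le)
    (l : Λ) (U : Set (Option Λ)) : (optSpace le h).Nhd (some l) U ↔ some l ∈ U := by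
  rw [nhd_def]
  show ¬(some l ∈ Uᶜ ∪ _) ↔ _
  simp [optSpace]

theorem optSpace_nhd_none {Λ : Type u} {le : Λ → Λ → Prop} (h : IsDirectedOrder le)
    (U : Set (Option Λ)) :
    (optSpace le h).Nhd none U ↔ none ∈ U ∧ ∃ l₀, ∀ l, le l₀ l → some l ∈ U := by
  rw [nhd_def]
  show ¬(none ∈ Uᶜ ∪ {z | z = none ∧ ∀ l₀, ∃ l, le l₀ l ∧ some l ∈ Uᶜ}) ↔ _
  simp only [mem_union, mem_compl_iff, mem_setOf_eq, true_and]
  push_neg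
  rfl

end Aux
section Key

theorem contConv_key {u : CechClosure X} {v : CechClosure Y} {Λ : Type u}
    {leΛ : Λ → Λ → Prop} (hΛ : IsDirectedOrder leΛ) {F : Λ → ContMap u v} {f : ContMap u v}
    (hFf : ContConv u v leΛ F f) (x : X) (V : Set Y) (hV : v.Nhd (f.1 x) V) :
    ∃ l₀ U, u.Nhd x U ∧ ∀ l, leΛ l₀ l → ∀ x' ∈ U, (F l).1 x' ∈ V := by
  by_contra hcon
  push_neg at hcon
  choose lf hlf xf hxf hnot using
    fun m : Λ × {U : Set X // u.Nhd x U} => hcon m.1 m.2.1 m.2.2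
  have hM : IsDirectedOrder (prodLE leΛ (u.nhdLE x)) :=
    prodLE_directed hΛ (u.nhdLE_directed x)
  have hs : NetConv u (prodLE leΛ (u.nhdLE x)) xf x := by
    intro U hU
    obtain ⟨a⟩ := hΛ.nonempty
    refine ⟨(a, ⟨U, hU⟩), ?_⟩
    rintro m ⟨-, hm⟩
    exact hm (hxf m)
  obtain ⟨⟨l₁, m₁⟩, hres⟩ := hFf _ _ hM xf x hs V hV
  obtain ⟨c, h1c, h2c⟩ := hΛ.directed l₁ m₁.1
  have hp := hres (lf (c, m₁.2), (c, m₁.2))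
    ⟨hΛ.trans _ _ _ h1c (hlf (c, m₁.2)), h2c, subset_rfl⟩
  exact hnot (c, m₁.2) hp

theorem optG_continuous {u : CechClosure X} {v : CechClosure Y} {Λ : Type u}
    {leΛ : Λ → Λ → Prop} (hΛ : IsDirectedOrder leΛ) {F : Λ → ContMap u v} {f : ContMap u v}
    (hFf : ContConv u v leΛ F f) :
    Continuous ((optSpace leΛ hΛ).prod u) v
      (fun p : Option Λ × X => (p.1.elim f F).1 p.2) := by
  rw [continuous_iff_nhd]
  rintro ⟨z, x⟩ V hV
  rw [prod_nhd_iff]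
  rcases z with _ | l
  · obtain ⟨l₀, U₁, hU₁, hkey⟩ := contConv_key hΛ hFf x V hV
    have hU₂ := (continuous_iff_nhd f.1).1 f.2 x V hV
    refine ⟨{none} ∪ {z | ∃ l, leΛ l₀ l ∧ z = some l}, U₁ ∩ (f.1 ⁻¹' V),
      ?_, u.nhd_inter hU₁ hU₂, ?_⟩
    · rw [optSpace_nhd_none]
      exact ⟨Or.inl rfl, l₀, fun l hl => Or.inr ⟨l, hl, rfl⟩⟩
    · rintro ⟨z', x'⟩ ⟨hz', hx'1, hx'2⟩
      rcases hz' with hz' | ⟨l, hl, rfl⟩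
      · rw [mem_singleton_iff] at hz'
        subst hz'
        exact hx'2
      · exact hkey l hl x' hx'1
  · refine ⟨{some l}, (F l).1 ⁻¹' V, ?_, (continuous_iff_nhd (F l).1).1 (F l).2 x V hV, ?_⟩
    · rw [optSpace_nhd_some]
      exact mem_singleton _
    · rintro ⟨z', x'⟩ ⟨hz', hx'⟩
      rw [mem_singleton_iff] at hz'
      subst hz'
      exact hx'

end Key

/-- A closure operator `σ` on `Y^X` is proper iff continuous convergence of a net implies
its convergence in `(Y^X, σ)`; and it is admissible iff convergence of a net in
`(Y^X, σ)` implies its continuous convergence. -/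
theorem proper_admissible_iff_convergence (u : CechClosure X) (v : CechClosure Y)
    (σ : CechClosure (ContMap u v)) :
    (Proper u v σ ↔
      ∀ (Λ : Type u) (leΛ : Λ → Λ → Prop), IsDirectedOrder leΛ →
        ∀ (F : Λ → ContMap u v) (f : ContMap u v),
          ContConv u v leΛ F f → NetConv σ leΛ F f) ∧
    (Admissible u v σ ↔
      ∀ (Λ : Type u) (leΛ : Λ → Λ → Prop), IsDirectedOrder leΛ →
        ∀ (F : Λ → ContMap u v) (f : ContMap u v),
          NetConv σ leΛ F f → ContConv u v leΛ F f) := by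
  constructor
  · constructor
    · -- Proper → convergence condition
      intro hp Λ leΛ hΛ F f hFf
      have hG := hp (Option Λ) (optSpace leΛ hΛ) (fun z => z.elim f F)
        (optG_continuous hΛ hFf)
      intro V hV
      have hn := (continuous_iff_nhd _).1 hG none V hV
      rw [optSpace_nhd_none] at hn
      obtain ⟨-, l₀, hl₀⟩ := hn
      exact ⟨l₀, fun l hl => hl₀ l hl⟩
    · -- convergence condition → Proper
      intro hc Z w G hg
      rintro A _ ⟨z, hz, rfl⟩
      rw [mem_cl_iff]
      intro V hV
      choose t ht using fun W : {W : Set Z // w.Nhd z W} => (w.mem_cl_iff A z).1 hz W.1 W.2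
      have hcc : ContConv u v (w.nhdLE z) (fun W => G (t W)) (G z) := by
        intro M leM hM s x hsx V' hV'
        have hpn := (continuous_iff_nhd _).1 hg (z, x) V' hV'
        rw [prod_nhd_iff] at hpn
        obtain ⟨W', U', hW', hU', hsub⟩ := hpn
        obtain ⟨m₀, hm₀⟩ := hsx U' hU'
        refine ⟨(⟨W', hW'⟩, m₀), ?_⟩
        rintro ⟨W, m⟩ ⟨hW, hm⟩
        exact hsub (Set.mk_mem_prod (hW (ht W).1) (hm₀ m hm))
      obtain ⟨W₀, hW₀⟩ := hc _ (w.nhdLE z) (w.nhdLE_directed z) _ _ hcc V hV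
      exact ⟨G (t W₀), hW₀ W₀ subset_rfl, ⟨t W₀, (ht W₀).2, rfl⟩⟩
  · constructor
    · -- Admissible → convergence condition
      intro ha Λ leΛ hΛ F f hσf
      have hGc : Continuous (optSpace leΛ hΛ) σ (fun z : Option Λ => z.elim f F) := by
        rw [continuous_iff_nhd]
        rintro (_ | l) V hV
        · rw [optSpace_nhd_none]
          obtain ⟨l₀, hl₀⟩ := hσf V hV
          exact ⟨σ.nhd_mem hV, l₀, fun l hl => hl₀ l hl⟩
        · rw [optSpace_nhd_some]
          exact σ.nhd_mem hV
      have hg := ha (Option Λ) (optSpace leΛ hΛ) _ hGc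
      intro M leM hM s x hsx V hV
      have hpn := (continuous_iff_nhd _).1 hg (none, x) V hV
      rw [prod_nhd_iff] at hpn
      obtain ⟨W, U, hW, hU, hsub⟩ := hpn
      rw [optSpace_nhd_none] at hW
      obtain ⟨-, l₀, hl₀⟩ := hW
      obtain ⟨m₀, hm₀⟩ := hsx U hU
      refine ⟨(l₀, m₀), ?_⟩
      rintro ⟨l, m⟩ ⟨hl, hm⟩
      exact hsub (Set.mk_mem_prod (hl₀ l hl) (hm₀ m hm))
    · -- convergence condition → Admissible
      intro hc Z w G hG
      rw [continuous_iff_nhd]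
      rintro ⟨z, x⟩ V hV
      rw [prod_nhd_iff]
      by_contra hcon
      push_neg at hcon
      have hex : ∀ i : {W : Set Z // w.Nhd z W} × {U : Set X // u.Nhd x U},
          ∃ q : Z × X, (q.1 ∈ i.1.1 ∧ q.2 ∈ i.2.1) ∧ (G q.1).1 q.2 ∉ V := by
        intro i
        obtain ⟨q, hq1, hq2⟩ := not_subset.1 (hcon i.1.1 i.2.1 i.1.2 i.2.2)
        exact ⟨q, hq1, hq2⟩
      choose q hq1 hq2 using hex
      have hι : IsDirectedOrder (prodLE (w.nhdLE z) (u.nhdLE x)) :=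
        prodLE_directed (w.nhdLE_directed z) (u.nhdLE_directed x)
      have hF : NetConv σ (prodLE (w.nhdLE z) (u.nhdLE x)) (fun i => G (q i).1) (G z) := by
        intro V' hV'
        have hW := (continuous_iff_nhd G).1 hG z V' hV'
        refine ⟨(⟨G ⁻¹' V', hW⟩, ⟨univ, u.nhd_univ x⟩), ?_⟩
        rintro ⟨W, U⟩ ⟨h1, -⟩
        exact h1 (hq1 (W, U)).1
      have hs : NetConv u (prodLE (w.nhdLE z) (u.nhdLE x)) (fun i => (q i).2) x := by
        intro U' hU'
        refine ⟨(⟨univ, w.nhd_univ z⟩, ⟨U', hU'⟩), ?_⟩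
        rintro ⟨W, U⟩ ⟨-, h2⟩
        exact h2 (hq1 (W, U)).2
      obtain ⟨⟨a, b⟩, hab⟩ := hc _ _ hι _ _ hF _ _ hι _ x hs V hV
      obtain ⟨c, hac, hbc⟩ := hι.directed a b
      exact hq2 c (hab (c, c) ⟨hac, hbc⟩)

end CechClosure
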